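/- Let (E,d) be a metric space and let K be a compact countable subset of E whose Cantor–Bendixson characteristic is (1,1), i.e. the derived set K' is a singleton. Then K, with the subspace topology, is homeomorphic to the ordinal ω+1 with its order topology. -/

import Mathlib

open Ordinal Set

/-- The `α`-th Cantor–Bendixson derivative of a set `A`, defined by transfinite
recursion: `A^(0) = A`, `A^(β+1) = (A^(β))'` (derived set in the ambient space),
and `A^(λ) = ⋂_{γ<λ} A^(γ)` at nonzero limit ordinals. -/
noncomputable def cbDeriv {X : Type*} [TopologicalSpace X] (A : Set X) (o : Ordinal) : Set X :=
  Ordinal.limitRecOn o A (fun _ ih => derivedSet ih)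
    (fun o _ ih => ⋂ (β : Ordinal) (h : β < o), ih β h)

/-- `A` has Cantor–Bendixson characteristic `(α, p)`: `α` is the least ordinal such
that the `α`-th Cantor–Bendixson derivative of `A` is finite, and that derivative has
exactly `p` elements. -/
def HasCBChar {X : Type*} [TopologicalSpace X] (A : Set X) (α : Ordinal) (p : ℕ) : Prop :=
  (cbDeriv A α).Finite ∧ (∀ β < α, ¬ (cbDeriv A β).Finite) ∧ (cbDeriv A α).ncard = p

lemma cbDeriv_zero {X : Type*} [TopologicalSpace X] (A : Set X) : cbDeriv A 0 = A :=
  Ordinal.limitRecOn_zero ..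

lemma cbDeriv_one {X : Type*} [TopologicalSpace X] (A : Set X) :
    cbDeriv A 1 = derivedSet A := by
  have : (1 : Ordinal) = Order.succ 0 := by simp
  rw [cbDeriv, this, Ordinal.limitRecOn_succ, ← cbDeriv, cbDeriv_zero]

open Filter Topology OnePoint in
theorem stmt2 {E : Type*} [MetricSpace E] (K : Set E)
    (hK : IsCompact K) (hKcount : K.Countable) (hchar : HasCBChar K 1 1) :
    Nonempty (↥K ≃ₜ ↥(Set.Iic (ω : Ordinal))) := by
  obtain ⟨hfin, hnf, hcard⟩ := hchar
  rw [cbDeriv_one] at hfin hcard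
  have hKinf : K.Infinite := by
    have := hnf 0 zero_lt_one
    rw [cbDeriv_zero] at this
    exact Set.not_infinite.not_right.mp (fun h => this h)
  obtain ⟨a, ha⟩ : ∃ a, derivedSet K = {a} := Set.ncard_eq_one.mp hcard
  have haK : a ∈ K := by
    have : a ∈ derivedSet K := ha ▸ rfl
    exact hK.isClosed.closure_eq ▸ derivedSet_subset_closure K this
  -- the set of isolated points
  set S : Set E := K \ {a} with hS
  have hSinf : S.Infinite := hKinf.diff (Set.finite_singleton a)
  have hScount : S.Countable := hKcount.mono Set.diff_subset
  have : Countable ↥S := hScount.to_subtype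
  have : Infinite ↥S := hSinf.to_subtype
  obtain ⟨e⟩ : Nonempty (ℕ ≃ ↥S) := nonempty_equiv_of_countable
  -- the map OnePoint ℕ → K
  let f : OnePoint ℕ → ↥K := fun x => x.elim ⟨a, haK⟩ (fun n => ⟨(e n : E), (e n).2.1⟩)
  have hne : ∀ n : ℕ, (e n : E) ≠ a := fun n => (e n).2.2
  have hfbij : Function.Bijective f := by
    constructor
    · rintro (_ | m) (_ | n) h <;> simp only [f, OnePoint.elim, Option.elim,
        Subtype.mk.injEq] at h
      · rfl
      · exact absurd h.symm (hne n)
      · exact absurd h (hne m)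
      · have : e m = e n := Subtype.ext h
        rw [e.injective this]
    · rintro ⟨k, hk⟩
      by_cases h : k = a
      · exact ⟨∞, Subtype.ext h.symm⟩
      · exact ⟨(e.symm ⟨k, hk, h⟩ : ℕ), Subtype.ext (by show ((e (e.symm ⟨k, hk, h⟩) : E)) = k; simp)⟩
  have hsmall : ∀ U ∈ 𝓝 a, {n : ℕ | (e n : E) ∉ U}.Finite := by
    intro U hU
    obtain ⟨V, hVU, hVopen, haV⟩ := mem_nhds_iff.mp hU
    have hTclosed : IsClosed (K \ V) := hK.isClosed.inter hVopen.isClosed_compl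
    have hTcomp : IsCompact (K \ V) := hK.of_isClosed_subset hTclosed Set.diff_subset
    have hTfin : (K \ V).Finite := by
      by_contra h
      obtain ⟨x, hxT, hx⟩ := Set.Infinite.exists_accPt_of_subset_isCompact (show (K \ V).Infinite from h)
        hTcomp subset_rfl
      have hxd : x ∈ derivedSet K :=
        derivedSet_mono _ _ (Set.diff_subset : K \ V ⊆ K) hx
      rw [ha] at hxd
      exact hxT.2 (hxd ▸ haV)
    have hinj : Function.Injective (fun n : ℕ => (e n : E)) :=
      fun m n h => e.injective (Subtype.ext h)
    refine (hTfin.preimage hinj.injOn).subset ?_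
    intro n hn
    exact ⟨(e n).2.1, fun hv => hn (hVU hv)⟩
  have hfcont : Continuous f := by
    rw [OnePoint.continuous_iff_from_discrete]
    rw [tendsto_subtype_rng]
    intro U hU
    exact Filter.mem_map.mpr (Filter.mem_cofinite.mpr (hsmall U hU))
  have : CompactSpace ↥K := isCompact_iff_compactSpace.mp hK
  let h₁ : OnePoint ℕ ≃ₜ ↥K := Continuous.homeoOfEquivCompactToT2 (f := Equiv.ofBijective f hfbij) hfcont
  -- the map OnePoint ℕ → Iic ω
  let g : OnePoint ℕ → ↥(Set.Iic (ω : Ordinal)) :=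
    fun x => x.elim ⟨ω, Set.mem_Iic.mpr le_rfl⟩ (fun n => ⟨(n : Ordinal), (Ordinal.nat_lt_omega0 n).le⟩)
  have hgbij : Function.Bijective g := by
    constructor
    · rintro (_ | m) (_ | n) h <;> simp only [g, OnePoint.elim, Option.elim,
        Subtype.mk.injEq] at h
      · rfl
      · exact absurd (congrArg Subtype.val h).symm (Ordinal.nat_lt_omega0 n).ne
      · exact absurd (congrArg Subtype.val h) (Ordinal.nat_lt_omega0 m).ne
      · have : m = n := Nat.cast_injective (R := Ordinal) (congrArg Subtype.val h)
        rw [this]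
    · rintro ⟨o, ho⟩
      rcases eq_or_lt_of_le (Set.mem_Iic.mp ho) with h | h
      · exact ⟨∞, Subtype.ext h.symm⟩
      · obtain ⟨n, rfl⟩ := Ordinal.lt_omega0.mp h
        exact ⟨(n : ℕ), rfl⟩
  have hgcont : Continuous g := by
    rw [OnePoint.continuous_iff_from_discrete, tendsto_subtype_rng]
    show Tendsto (fun n : ℕ => (n : Ordinal)) cofinite (𝓝 ω)
    rw [Nat.cofinite_eq_atTop]
    rw [(SuccOrder.hasBasis_nhds_Ioc_of_exists_lt ⟨0, Ordinal.omega0_pos⟩).tendsto_right_iff]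
    intro b hb
    obtain ⟨m, rfl⟩ := Ordinal.lt_omega0.mp hb
    filter_upwards [Filter.eventually_ge_atTop (m + 1)] with n hn
    exact ⟨by exact_mod_cast Nat.lt_of_succ_le hn, (Ordinal.nat_lt_omega0 n).le⟩
  let h₂ : OnePoint ℕ ≃ₜ ↥(Set.Iic (ω : Ordinal)) :=
    Continuous.homeoOfEquivCompactToT2 (f := Equiv.ofBijective g hgbij) hgcont
  exact ⟨h₁.symm.trans h₂⟩
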